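/- Suppose V is nonempty, Γ is connected, no edge e ∈ E has exactly one v ∈ V with γ e v ≠ 0 (no leaves), and every cycle in Γ is balanced (i.e. Γ is in equilibrium). Then ker(γ) ≠ {0}; moreover there exists d ∈ ker(γ) with d v ≠ 0 for every v ∈ V. -/

import Mathlib

/-- The defining property of the incidence matrix of a multiquiver: every row has
at most one positive and at most one negative entry. -/
def CondM {V E : Type*} (γ : E → V → ℤ) : Prop :=
  ∀ e : E, (∀ v w : V, 0 < γ e v → 0 < γ e w → v = w) ∧
    (∀ v w : V, γ e v < 0 → γ e w < 0 → v = w)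

/-- Two vertices are adjacent if they are distinct and some edge is incident to
both of them. -/
def MQAdj {V E : Type*} (γ : E → V → ℤ) (v w : V) : Prop :=
  v ≠ w ∧ ∃ e : E, γ e v ≠ 0 ∧ γ e w ≠ 0

/-- The multiquiver is connected if any two vertices are related by the
reflexive–transitive closure of adjacency. -/
def MQConnected {V E : Type*} (γ : E → V → ℤ) : Prop :=
  ∀ v w : V, Relation.ReflTransGen (MQAdj γ) v w

/-- The kernel of the incidence matrix `γ`, as a `ℚ`-subspace of `V → ℚ`:
`{d | ∀ e, Σ_v γ e v · d v = 0}`. -/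
def kerGamma {V E : Type*} [Fintype V] (γ : E → V → ℤ) : Submodule ℚ (V → ℚ) where
  carrier := {d | ∀ e : E, ∑ v : V, (γ e v : ℚ) * d v = 0}
  add_mem' := by
    intro a b ha hb e
    have : ∑ v : V, (γ e v : ℚ) * (a v + b v)
        = (∑ v : V, (γ e v : ℚ) * a v) + ∑ v : V, (γ e v : ℚ) * b v := by
      rw [← Finset.sum_add_distrib]
      exact Finset.sum_congr rfl fun v _ => by ring
    simpa [this] using by rw [ha e, hb e, add_zero]
  zero_mem' := by intro e; simp
  smul_mem' := by
    intro c a ha e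
    have : ∑ v : V, (γ e v : ℚ) * (c * a v) = c * ∑ v : V, (γ e v : ℚ) * a v := by
      rw [Finset.mul_sum]
      exact Finset.sum_congr rfl fun v _ => by ring
    simp only [Pi.smul_apply, smul_eq_mul]
    rw [this, ha e, mul_zero]

/-- A (not necessarily directed) cycle in the multiquiver with incidence matrix
`γ`: `n ≥ 2` distinct vertices `v i` and distinct edges `e i`, with `e i`
incident to `v i` and `v (i+1)` (indices mod `n`). -/
structure MQCycle {V E : Type*} (γ : E → V → ℤ) where
  n : ℕ
  hn : 2 ≤ n
  v : ZMod n → V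
  e : ZMod n → E
  hv : Function.Injective v
  he : Function.Injective e
  h1 : ∀ i, γ (e i) (v i) ≠ 0
  h2 : ∀ i, γ (e i) (v (i + 1)) ≠ 0

/-- A cycle is balanced if the product of the multiplicities at its sources
equals the product of the multiplicities at its targets. -/
def MQCycle.Balanced {V E : Type*} {γ : E → V → ℤ} (c : MQCycle γ) : Prop :=
  haveI : NeZero c.n := ⟨by have := c.hn; omega⟩
  ∏ i : ZMod c.n, (γ (c.e i) (c.v i)).natAbs = ∏ i : ZMod c.n, (γ (c.e i) (c.v (i + 1))).natAbs

/-- The setoid on vertices whose classes are the connected components. -/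
def mqSetoid {V E : Type*} (γ : E → V → ℤ) : Setoid V :=
  ⟨Relation.EqvGen (MQAdj γ), Relation.EqvGen.is_equivalence _⟩

/-- The edge `e` is a leaf at the component `C`: exactly one vertex is incident
to `e`, and that vertex lies in `C`. -/
def LeafAt {V E : Type*} (γ : E → V → ℤ) (C : Quotient (mqSetoid γ)) (e : E) : Prop :=
  (∃! v : V, γ e v ≠ 0) ∧ ∀ v : V, γ e v ≠ 0 → Quotient.mk (mqSetoid γ) v = C

/-- A connected component is in equilibrium if no edge is a leaf at it and every
cycle all of whose vertices lie in it is balanced. -/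
def InEquilibrium {V E : Type*} (γ : E → V → ℤ) (C : Quotient (mqSetoid γ)) : Prop :=
  (∀ e : E, ¬ LeafAt γ C e) ∧
    ∀ c : MQCycle γ, (∀ i, Quotient.mk (mqSetoid γ) (c.v i) = C) → c.Balanced

namespace MQAux

variable {V E : Type*} {γ : E → V → ℤ}

lemma opp_sign (hM : CondM γ) {e : E} {v w : V} (hv : γ e v ≠ 0) (hw : γ e w ≠ 0)
    (hvw : v ≠ w) : γ e v * γ e w < 0 := by
  rcases lt_or_gt_of_ne hv with h1 | h1 <;> rcases lt_or_gt_of_ne hw with h2 | h2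
  · exact absurd ((hM e).2 v w h1 h2) hvw
  · exact mul_neg_of_neg_of_pos h1 h2
  · exact mul_neg_of_pos_of_neg h1 h2
  · exact absurd ((hM e).1 v w h1 h2) hvw

lemma incident_eq (hM : CondM γ) {e : E} {v w x : V} (hv : γ e v ≠ 0) (hw : γ e w ≠ 0)
    (hvw : v ≠ w) (hx : γ e x ≠ 0) : x = v ∨ x = w := by
  rcases lt_or_gt_of_ne hv with h1 | h1 <;> rcases lt_or_gt_of_ne hw with h2 | h2
  · exact absurd ((hM e).2 v w h1 h2) hvw
  · rcases lt_or_gt_of_ne hx with h3 | h3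
    · exact Or.inl ((hM e).2 x v h3 h1)
    · exact Or.inr ((hM e).1 x w h3 h2)
  · rcases lt_or_gt_of_ne hx with h3 | h3
    · exact Or.inr ((hM e).2 x w h3 h2)
    · exact Or.inl ((hM e).1 x v h3 h1)
  · exact absurd ((hM e).1 v w h1 h2) hvw

lemma ratio_abs {a b : ℤ} (h : a * b < 0) :
    -(a : ℚ) / (b : ℚ) = (a.natAbs : ℚ) / (b.natAbs : ℚ) := by
  rcases lt_trichotomy a 0 with ha | ha | ha
  · have hb : 0 < b := by nlinarith
    rw [Nat.cast_natAbs (α := ℚ), Nat.cast_natAbs (α := ℚ)]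
    push_cast
    rw [abs_of_neg (by exact_mod_cast ha : (a:ℚ) < 0), abs_of_pos (by exact_mod_cast hb : (0:ℚ) < b)]
  · simp [ha] at h
  · have hb : b < 0 := by nlinarith
    rw [Nat.cast_natAbs (α := ℚ), Nat.cast_natAbs (α := ℚ)]
    push_cast
    rw [abs_of_pos (by exact_mod_cast ha : (0:ℚ) < a), abs_of_neg (by exact_mod_cast hb : (b:ℚ) < 0),
      div_neg, neg_div]

inductive MQWalk (γ : E → V → ℤ) : V → V → Type _ where
  | nil (v : V) : MQWalk γ v v
  | cons {u v w : V} (e : E) (h1 : γ e u ≠ 0) (h2 : γ e v ≠ 0) (hne : u ≠ v)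
      (p : MQWalk γ v w) : MQWalk γ u w

namespace MQWalk

variable {γ : E → V → ℤ}

def gain : {u w : V} → MQWalk γ u w → ℚ
  | _, _, .nil _ => 1
  | u, _, .cons (v := v) e _ _ _ p => (-(γ e u : ℚ) / (γ e v : ℚ)) * p.gain

def length : {u w : V} → MQWalk γ u w → ℕ
  | _, _, .nil _ => 0
  | _, _, .cons _ _ _ _ p => p.length + 1

@[simp] lemma length_nil (v : V) : (nil (γ := γ) v).length = 0 := rfl
@[simp] lemma length_cons {u v w : V} (e : E) (h1 : γ e u ≠ 0) (h2 : γ e v ≠ 0) (hne : u ≠ v)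
    (p : MQWalk γ v w) : (cons e h1 h2 hne p).length = p.length + 1 := rfl

def vf : {u w : V} → (p : MQWalk γ u w) → Fin (p.length + 1) → V
  | _, _, .nil v => fun _ => v
  | u, _, .cons _ _ _ _ p => Fin.cons (α := fun _ => V) u p.vf

def ef : {u w : V} → (p : MQWalk γ u w) → Fin p.length → E
  | _, _, .nil _ => Fin.elim0
  | _, _, .cons e _ _ _ p => Fin.cons (α := fun _ => E) e p.ef

@[simp] lemma vf_cons {u v w : V} (e : E) (h1 : γ e u ≠ 0) (h2 : γ e v ≠ 0) (hne : u ≠ v)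
    (p : MQWalk γ v w) : (cons e h1 h2 hne p).vf = Fin.cons (α := fun _ => V) u p.vf := rfl

@[simp] lemma ef_cons {u v w : V} (e : E) (h1 : γ e u ≠ 0) (h2 : γ e v ≠ 0) (hne : u ≠ v)
    (p : MQWalk γ v w) : (cons e h1 h2 hne p).ef = Fin.cons (α := fun _ => E) e p.ef := rfl

@[simp] lemma gain_nil (v : V) : (nil (γ := γ) v).gain = 1 := rfl
@[simp] lemma gain_cons {u v w : V} (e : E) (h1 : γ e u ≠ 0) (h2 : γ e v ≠ 0) (hne : u ≠ v)
    (p : MQWalk γ v w) : (cons e h1 h2 hne p).gain = (-(γ e u : ℚ) / (γ e v : ℚ)) * p.gain := rfl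

@[simp] lemma vf_zero : ∀ {u w : V} (p : MQWalk γ u w), p.vf 0 = u := by
  intro u w p
  cases p with
  | nil v => rfl
  | cons e h1 h2 hne p => erw [vf_cons, Fin.cons_zero]

lemma vf_last : ∀ {u w : V} (p : MQWalk γ u w), p.vf (Fin.last _) = w := by
  intro u w p
  induction p with
  | nil v => rfl
  | cons e h1 h2 hne p ih =>
    rw [vf_cons]
    rw [show Fin.last ((cons e h1 h2 hne p).length) = Fin.succ (Fin.last p.length) from
      (Fin.succ_last _).symm, Fin.cons_succ]
    exact ih

lemma step1 : ∀ {u w : V} (p : MQWalk γ u w) (i : Fin p.length), γ (p.ef i) (p.vf i.castSucc) ≠ 0 := by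
  intro u w p
  induction p with
  | nil v => exact fun i => i.elim0
  | cons e h1 h2 hne p ih =>
    intro i
    refine Fin.cases ?_ (fun j => ?_) i
    · erw [ef_cons, vf_cons, Fin.cons_zero, Fin.castSucc_zero' (n := p.length + 1), Fin.cons_zero]
      exact h1
    · erw [ef_cons, vf_cons, Fin.cons_succ, ← Fin.succ_castSucc, Fin.cons_succ]
      exact ih j

lemma step2 : ∀ {u w : V} (p : MQWalk γ u w) (i : Fin p.length), γ (p.ef i) (p.vf i.succ) ≠ 0 := by
  intro u w p
  induction p with
  | nil v => exact fun i => i.elim0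
  | cons e h1 h2 hne p ih =>
    intro i
    refine Fin.cases ?_ (fun j => ?_) i
    · erw [ef_cons, vf_cons, Fin.cons_zero, Fin.cons_succ, vf_zero]
      exact h2
    · erw [ef_cons, vf_cons, Fin.cons_succ, Fin.cons_succ]
      exact ih j

lemma step3 : ∀ {u w : V} (p : MQWalk γ u w) (i : Fin p.length), p.vf i.castSucc ≠ p.vf i.succ := by
  intro u w p
  induction p with
  | nil v => exact fun i => i.elim0
  | cons e h1 h2 hne p ih =>
    intro i
    refine Fin.cases ?_ (fun j => ?_) i
    · erw [vf_cons, Fin.castSucc_zero' (n := p.length + 1), Fin.cons_zero, Fin.cons_succ, vf_zero]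
      exact hne
    · erw [vf_cons, ← Fin.succ_castSucc, Fin.cons_succ, Fin.cons_succ]
      exact ih j

lemma gain_eq : ∀ {u w : V} (p : MQWalk γ u w),
    p.gain = ∏ i : Fin p.length, (-(γ (p.ef i) (p.vf i.castSucc) : ℚ) / (γ (p.ef i) (p.vf i.succ) : ℚ)) := by
  intro u w p
  induction p with
  | nil v => exact (Finset.prod_eq_one (fun i _ => i.elim0)).symm
  | cons e h1 h2 hne p ih =>
    rw [gain_cons, ih]
    rw [show ∏ i : Fin ((cons e h1 h2 hne p).length),
        (-(γ ((cons e h1 h2 hne p).ef i) ((cons e h1 h2 hne p).vf i.castSucc) : ℚ) /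
          (γ ((cons e h1 h2 hne p).ef i) ((cons e h1 h2 hne p).vf i.succ) : ℚ)) =
        ∏ i : Fin (p.length + 1),
        (-(γ ((cons e h1 h2 hne p).ef i) ((cons e h1 h2 hne p).vf i.castSucc) : ℚ) /
          (γ ((cons e h1 h2 hne p).ef i) ((cons e h1 h2 hne p).vf i.succ) : ℚ)) from rfl,
      Fin.prod_univ_succ]
    simp only [ef_cons, vf_cons, Fin.cons_zero, Fin.castSucc_zero, vf_zero,
      ← Fin.succ_castSucc, Fin.cons_succ]

def append : {u v w : V} → MQWalk γ u v → MQWalk γ v w → MQWalk γ u w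
  | _, _, _, .nil _, q => q
  | _, _, _, .cons e h1 h2 hne p, q => .cons e h1 h2 hne (p.append q)

@[simp] lemma gain_append : ∀ {u v w : V} (p : MQWalk γ u v) (q : MQWalk γ v w),
    (p.append q).gain = p.gain * q.gain := by
  intro u v w p q
  induction p with
  | nil _ => show q.gain = 1 * q.gain; rw [one_mul]
  | cons e h1 h2 hne p ih =>
    show (-(γ e _ : ℚ) / _) * (p.append q).gain = _
    rw [ih, gain_cons, mul_assoc]

def reverse : {u w : V} → MQWalk γ u w → MQWalk γ w u
  | _, _, .nil v => .nil v
  | _, _, .cons e h1 h2 hne p => p.reverse.append (.cons e h2 h1 hne.symm (.nil _))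

lemma gain_mul_gain_reverse : ∀ {u w : V} (p : MQWalk γ u w), p.gain * p.reverse.gain = 1 := by
  intro u w p
  induction p with
  | nil _ => show (1:ℚ) * 1 = 1; rw [one_mul]
  | cons e h1 h2 hne p ih =>
    rename_i u v w
    show (-(γ e u : ℚ) / (γ e v : ℚ)) * p.gain * (p.reverse.append _).gain = 1
    rw [gain_append, gain_cons, gain_nil]
    have hu : (γ e u : ℚ) ≠ 0 := by exact_mod_cast h1
    have hv : (γ e v : ℚ) ≠ 0 := by exact_mod_cast h2
    have key : (-(γ e u : ℚ) / (γ e v : ℚ)) * (-(γ e v : ℚ) / (γ e u : ℚ)) = 1 := by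
      field_simp
    calc (-(γ e u : ℚ) / (γ e v : ℚ)) * p.gain * (p.reverse.gain * (-(γ e v : ℚ) / (γ e u : ℚ) * 1))
        = ((-(γ e u : ℚ) / (γ e v : ℚ)) * (-(γ e v : ℚ) / (γ e u : ℚ))) * (p.gain * p.reverse.gain) := by
          ring
      _ = 1 := by rw [key, ih, mul_one]

lemma gain_pos (hM : CondM γ) :
    ∀ {u w : V} (p : MQWalk γ u w), 0 < p.gain := by
  intro u w p
  induction p with
  | nil _ => exact one_pos
  | cons e h1 h2 hne p ih =>
    rename_i u' v' w'
    rw [gain_cons]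
    have hop' := opp_sign hM h1 h2 hne
    refine mul_pos ?_ ih
    rcases lt_trichotomy (γ e u') 0 with ha | ha | ha
    · have hb : (0:ℤ) < γ e v' := by nlinarith
      apply div_pos
      · have : (γ e u' : ℚ) < 0 := by exact_mod_cast ha
        linarith
      · exact_mod_cast hb
    · simp [ha] at hop'
    · have hb : γ e v' < 0 := by nlinarith
      rw [div_pos_iff]
      right
      refine ⟨?_, by exact_mod_cast hb⟩
      have : (0:ℚ) < (γ e u' : ℚ) := by exact_mod_cast ha
      linarith

end MQWalk

lemma prod_zmod_eq_prod_range {M : Type*} [CommMonoid M] (n : ℕ) (g : ℕ → M) :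
    ∏ i : ZMod (n+1), g (ZMod.val i) = ∏ t ∈ Finset.range (n+1), g t :=
  Fin.prod_univ_eq_prod_range g (n+1)

lemma cast_val_zmod (n : ℕ) (x : ZMod (n+1)) : ((x.val : ℕ) : ZMod (n+1)) = x :=
  ZMod.natCast_rightInverse x

lemma add_one_cast (n : ℕ) (k : ZMod (n+1)) : k + 1 = ((k.val + 1 : ℕ) : ZMod (n+1)) := by
  conv_lhs => rw [← cast_val_zmod n k]
  push_cast
  ring

lemma core (hM : CondM γ) (hbal : ∀ c : MQCycle γ, c.Balanced) :
    ∀ (n : ℕ) (vs : ZMod (n+1) → V) (es : ZMod (n+1) → E),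
      (∀ i, γ (es i) (vs i) ≠ 0) → (∀ i, γ (es i) (vs (i+1)) ≠ 0) →
      (∀ i, vs i ≠ vs (i+1)) →
      ∏ i : ZMod (n+1), (-(γ (es i) (vs i) : ℚ) / (γ (es i) (vs (i+1)) : ℚ)) = 1 := by
  intro n
  induction n using Nat.strong_induction_on with
  | _ n ih =>
  intro vs es h1 h2 h3
  by_cases hinj : Function.Injective vs
  · rcases Nat.eq_zero_or_pos n with rfl | hn
    · exact absurd (congrArg vs (by decide : ((0:ZMod 1)+1) = 0)).symm (h3 0)
    · by_cases hinje : Function.Injective es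
      · have hb : ∏ i : ZMod (n+1), (γ (es i) (vs i)).natAbs
            = ∏ i : ZMod (n+1), (γ (es i) (vs (i+1))).natAbs :=
          hbal ⟨n+1, by omega, vs, es, hinj, hinje, h1, h2⟩
        have hfac : ∀ i : ZMod (n+1), (-(γ (es i) (vs i) : ℚ) / (γ (es i) (vs (i+1)) : ℚ))
            = (((γ (es i) (vs i)).natAbs : ℚ) / ((γ (es i) (vs (i+1))).natAbs : ℚ)) :=
          fun i => ratio_abs (opp_sign hM (h1 i) (h2 i) (h3 i))
        rw [Finset.prod_congr rfl (fun i _ => hfac i), Finset.prod_div_distrib,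
          ← Nat.cast_prod, ← Nat.cast_prod, hb]
        have hden : (∏ i : ZMod (n+1), (γ (es i) (vs (i+1))).natAbs) ≠ 0 :=
          Finset.prod_ne_zero_iff.mpr fun i _ => Int.natAbs_ne_zero.mpr (h2 i)
        exact div_self (Nat.cast_ne_zero.mpr hden)
      · obtain ⟨i, j, hesij, hij⟩ : ∃ i j, es i = es j ∧ i ≠ j :=
          Function.not_injective_iff.mp hinje
        have hvj : γ (es i) (vs j) ≠ 0 := by rw [hesij]; exact h1 j
        have hvj1 : γ (es i) (vs (j+1)) ≠ 0 := by rw [hesij]; exact h2 j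
        have hji : j = i + 1 := by
          rcases incident_eq hM (h1 i) (h2 i) (h3 i) hvj with h | h
          · exact absurd (hinj h).symm hij
          · exact hinj h
        have hij' : j + 1 = i := by
          rcases incident_eq hM (h1 i) (h2 i) (h3 i) hvj1 with h | h
          · exact hinj h
          · exact absurd (add_right_cancel (hinj h)).symm hij
        have hii2 : i + 1 + 1 = i := by rw [← hji]; exact hij'
        have h2z : ((2:ℕ) : ZMod (n+1)) = 0 := by
          have key : i + (1 + 1) = i + 0 := by rw [← add_assoc, add_zero]; exact hii2
          have h11 : ((1:ZMod (n+1)) + 1) = 0 := add_left_cancel key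
          calc ((2:ℕ) : ZMod (n+1)) = (1:ZMod (n+1)) + 1 := by push_cast; ring
            _ = 0 := h11
        have hdvd : (n+1) ∣ 2 := (ZMod.natCast_eq_zero_iff 2 (n+1)).mp h2z
        have hn1 : n = 1 := by
          have := Nat.le_of_dvd two_pos hdvd
          omega
        subst hn1
        have hii : ∀ k : ZMod 2, k ≠ k + 1 := by decide
        have huniv : (Finset.univ : Finset (ZMod 2)) = {i, i+1} := by
          symm
          apply Finset.eq_univ_of_card
          rw [Finset.card_insert_of_notMem (by simpa using hii i), Finset.card_singleton,
            ZMod.card]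
        rw [huniv, Finset.prod_insert (by simpa using hii i), Finset.prod_singleton]
        have hes : es (i+1) = es i := by rw [← hji, ← hesij]
        have hvv : i + 1 + 1 = i := hii2
        rw [hes, hvv]
        have ha : (γ (es i) (vs i) : ℚ) ≠ 0 := by exact_mod_cast h1 i
        have hb : (γ (es i) (vs (i+1)) : ℚ) ≠ 0 := by exact_mod_cast h2 i
        field_simp
  · obtain ⟨i0, j0, heq0, hne0⟩ : ∃ a b, vs a = vs b ∧ a ≠ b :=
      Function.not_injective_iff.mp hinj
    set vs' : ZMod (n+1) → V := fun k => vs (k + i0) with hvs'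
    set es' : ZMod (n+1) → E := fun k => es (k + i0) with hes'
    have hshift : ∀ k : ZMod (n+1), vs' (k+1) = vs ((k + i0) + 1) := by
      intro k
      show vs (k + 1 + i0) = vs ((k + i0) + 1)
      rw [add_right_comm]
    have h1' : ∀ k, γ (es' k) (vs' k) ≠ 0 := fun k => h1 (k + i0)
    have h2' : ∀ k, γ (es' k) (vs' (k+1)) ≠ 0 := by
      intro k; rw [hshift]; exact h2 (k + i0)
    have h3' : ∀ k, vs' k ≠ vs' (k+1) := by
      intro k; rw [hshift]; exact h3 (k + i0)
    set j1 : ZMod (n+1) := j0 - i0 with hj1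
    have hj1ne : j1 ≠ 0 := by
      intro h
      exact hne0 (sub_eq_zero.mp h).symm
    have heq' : vs' 0 = vs' j1 := by
      show vs (0 + i0) = vs (j1 + i0)
      rw [zero_add, hj1, sub_add_cancel]
      exact heq0
    have hval1 : 1 ≤ j1.val := by
      rcases Nat.eq_zero_or_pos j1.val with h | h
      · exact absurd ((ZMod.val_eq_zero j1).mp h) hj1ne
      · exact h
    have hval2 : j1.val ≤ n := by have := ZMod.val_lt j1; omega
    obtain ⟨a, ha⟩ : ∃ a, j1.val = a + 1 := ⟨j1.val - 1, by omega⟩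
    obtain ⟨b, hbb⟩ : ∃ b, n + 1 - j1.val = b + 1 := ⟨n - j1.val, by omega⟩
    -- the first part of the split
    set vs1 : ZMod (a+1) → V := fun k => vs' ((k.val : ℕ) : ZMod (n+1)) with hvs1
    set es1 : ZMod (a+1) → E := fun k => es' ((k.val : ℕ) : ZMod (n+1)) with hes1
    have key1 : ∀ k : ZMod (a+1), vs1 (k+1) = vs' (((k.val : ℕ) : ZMod (n+1)) + 1) := by
      intro k
      show vs' (((k+1 : ZMod (a+1)).val : ℕ) : ZMod (n+1)) = _
      by_cases hk : k.val = a
      · have hk1 : (k + 1 : ZMod (a+1)) = 0 := by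
          rw [add_one_cast a k, hk]
          exact_mod_cast ZMod.natCast_self (a+1)
        rw [hk1, ZMod.val_zero, Nat.cast_zero, heq']
        congr 1
        rw [hk]
        have : ((a : ℕ) : ZMod (n+1)) + 1 = ((j1.val : ℕ) : ZMod (n+1)) := by
          rw [ha]; push_cast; ring
        rw [this, cast_val_zmod]
      · have hlt : k.val + 1 < a + 1 := by have := ZMod.val_lt k; omega
        have hk1 : (k+1 : ZMod (a+1)).val = k.val + 1 := by
          rw [add_one_cast a k, ZMod.val_cast_of_lt hlt]
        rw [hk1]
        push_cast
        ring_nf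
    have h11 : ∀ k, γ (es1 k) (vs1 k) ≠ 0 := fun k => h1' _
    have h21 : ∀ k, γ (es1 k) (vs1 (k+1)) ≠ 0 := fun k => by rw [key1 k]; exact h2' _
    have h31 : ∀ k, vs1 k ≠ vs1 (k+1) := fun k => by rw [key1 k]; exact h3' _
    have P1 := ih a (by omega) vs1 es1 h11 h21 h31
    -- the second part of the split
    set vs2 : ZMod (b+1) → V := fun k => vs' (j1 + ((k.val : ℕ) : ZMod (n+1))) with hvs2
    set es2 : ZMod (b+1) → E := fun k => es' (j1 + ((k.val : ℕ) : ZMod (n+1))) with hes2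
    have key2 : ∀ k : ZMod (b+1), vs2 (k+1) = vs' (j1 + ((k.val : ℕ) : ZMod (n+1)) + 1) := by
      intro k
      show vs' (j1 + (((k+1 : ZMod (b+1)).val : ℕ) : ZMod (n+1))) = _
      by_cases hk : k.val = b
      · have hk1 : (k + 1 : ZMod (b+1)) = 0 := by
          rw [add_one_cast b k, hk]
          exact_mod_cast ZMod.natCast_self (b+1)
        rw [hk1, ZMod.val_zero, Nat.cast_zero, add_zero, ← heq']
        congr 1
        rw [hk]
        have : j1 + ((b : ℕ) : ZMod (n+1)) + 1 = ((j1.val + b + 1 : ℕ) : ZMod (n+1)) := by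
          conv_lhs => rw [← cast_val_zmod n j1]
          push_cast
          ring
        rw [this, show j1.val + b + 1 = n + 1 by omega]
        exact (ZMod.natCast_self (n+1)).symm
      · have hlt : k.val + 1 < b + 1 := by have := ZMod.val_lt k; omega
        have hk1 : (k+1 : ZMod (b+1)).val = k.val + 1 := by
          rw [add_one_cast b k, ZMod.val_cast_of_lt hlt]
        rw [hk1]
        push_cast
        ring_nf
    have h12 : ∀ k, γ (es2 k) (vs2 k) ≠ 0 := fun k => h1' _
    have h22 : ∀ k, γ (es2 k) (vs2 (k+1)) ≠ 0 := fun k => by rw [key2 k]; exact h2' _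
    have h32 : ∀ k, vs2 k ≠ vs2 (k+1) := fun k => by rw [key2 k]; exact h3' _
    have P2 := ih b (by omega) vs2 es2 h12 h22 h32
    -- now assemble
    set g : ℕ → ℚ := fun t =>
      (-(γ (es' ((t : ℕ) : ZMod (n+1))) (vs' ((t : ℕ) : ZMod (n+1))) : ℚ) /
        (γ (es' ((t : ℕ) : ZMod (n+1))) (vs' (((t : ℕ) : ZMod (n+1)) + 1)) : ℚ)) with hg
    have hrot : ∏ k : ZMod (n+1), (-(γ (es' k) (vs' k) : ℚ) / (γ (es' k) (vs' (k+1)) : ℚ))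
        = ∏ k : ZMod (n+1), (-(γ (es k) (vs k) : ℚ) / (γ (es k) (vs (k+1)) : ℚ)) := by
      apply Fintype.prod_equiv (Equiv.addRight i0)
      intro x
      show -(γ (es (x+i0)) (vs (x+i0)) : ℚ) / (γ (es (x+i0)) (vs' (x+1)) : ℚ) = _
      rw [hshift]
      rfl
    rw [← hrot]
    have hstep : ∀ k : ZMod (n+1),
        (-(γ (es' k) (vs' k) : ℚ) / (γ (es' k) (vs' (k+1)) : ℚ)) = g k.val := by
      intro k
      rw [hg]
      simp only [cast_val_zmod n k]
    rw [Finset.prod_congr rfl (fun k _ => hstep k), prod_zmod_eq_prod_range n g]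
    rw [show n + 1 = j1.val + (b+1) by omega, Finset.prod_range_add]
    have hP1' : ∏ t ∈ Finset.range j1.val, g t = 1 := by
      rw [ha, ← prod_zmod_eq_prod_range a g]
      rw [← P1]
      refine Finset.prod_congr rfl fun k _ => ?_
      rw [key1 k, hg]
    have hP2' : ∏ t ∈ Finset.range (b+1), g (j1.val + t) = 1 := by
      rw [← prod_zmod_eq_prod_range b (fun t => g (j1.val + t))]
      rw [← P2]
      refine Finset.prod_congr rfl fun k _ => ?_
      have hc : ((j1.val + k.val : ℕ) : ZMod (n+1)) = j1 + ((k.val : ℕ) : ZMod (n+1)) := by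
        conv_rhs => rw [← cast_val_zmod n j1]
        push_cast
        ring
      show g (j1.val + k.val) = _
      rw [key2 k]
      simp only [hg, hc, hvs2, hes2]
    rw [hP1', hP2', mul_one]

lemma walk_of_reflTransGen {a b : V} (h : Relation.ReflTransGen (MQAdj γ) a b) :
    Nonempty (MQWalk γ a b) := by
  induction h with
  | refl => exact ⟨.nil a⟩
  | tail hab hbc ih =>
    obtain ⟨p⟩ := ih
    obtain ⟨hne, e, he1, he2⟩ := hbc
    exact ⟨p.append (.cons e he1 he2 hne (.nil _))⟩

lemma gain_closed (hM : CondM γ) (hbal : ∀ c : MQCycle γ, c.Balanced)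
    {v : V} (p : MQWalk γ v v) : p.gain = 1 := by
  cases p with
  | nil => rfl
  | cons e h1 h2 hne q =>
    rename_i u'
    set p : MQWalk γ v v := MQWalk.cons e h1 h2 hne q with hp
    set m := q.length with hm
    have hplen : p.length = m + 1 := rfl
    set VS : ZMod (m+1) → V := fun i => p.vf ⟨i.val, by have := ZMod.val_lt i; omega⟩ with hVS
    set ES : ZMod (m+1) → E := fun i => p.ef ⟨i.val, by have := ZMod.val_lt i; exact this⟩ with hES
    have keyc : ∀ i : ZMod (m+1), VS (i+1) = p.vf (Fin.succ ⟨i.val, ZMod.val_lt i⟩) := by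
      intro i
      by_cases hk : i.val = m
      · have hk1 : (i + 1 : ZMod (m+1)) = 0 := by
          rw [add_one_cast m i, hk]
          exact_mod_cast ZMod.natCast_self (m+1)
        rw [hVS]
        simp only [hk1]
        have hz : (⟨(0 : ZMod (m+1)).val, by have := ZMod.val_lt (0 : ZMod (m+1)); omega⟩ :
            Fin (p.length + 1)) = (0 : Fin (p.length + 1)) := by
          apply Fin.ext
          simp [ZMod.val_zero]
        rw [hz, MQWalk.vf_zero]
        have hlast : (Fin.succ (⟨i.val, ZMod.val_lt i⟩ : Fin p.length)) = Fin.last (p.length) := by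
          apply Fin.ext
          simp [hk, hplen]
        rw [hlast, MQWalk.vf_last]
      · have hlt : i.val + 1 < m + 1 := by have := ZMod.val_lt i; omega
        have hk1 : (i+1 : ZMod (m+1)).val = i.val + 1 := by
          rw [add_one_cast m i, ZMod.val_cast_of_lt hlt]
        rw [hVS]
        simp only [hk1]
        congr 1
    have h1c : ∀ i, γ (ES i) (VS i) ≠ 0 := by
      intro i
      have := MQWalk.step1 p ⟨i.val, ZMod.val_lt i⟩
      exact this
    have h2c : ∀ i, γ (ES i) (VS (i+1)) ≠ 0 := by
      intro i
      rw [keyc i]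
      exact MQWalk.step2 p ⟨i.val, ZMod.val_lt i⟩
    have h3c : ∀ i, VS i ≠ VS (i+1) := by
      intro i
      rw [keyc i]
      exact MQWalk.step3 p ⟨i.val, ZMod.val_lt i⟩
    have hcore := core hM hbal m VS ES h1c h2c h3c
    rw [MQWalk.gain_eq p]
    set G : ℕ → ℚ := fun t =>
      if h : t < p.length then
        (-(γ (p.ef ⟨t, h⟩) (p.vf (Fin.castSucc ⟨t, h⟩)) : ℚ) /
          (γ (p.ef ⟨t, h⟩) (p.vf (Fin.succ ⟨t, h⟩)) : ℚ))
      else 1 with hG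
    have hfin : ∏ i : Fin p.length,
        (-(γ (p.ef i) (p.vf i.castSucc) : ℚ) / (γ (p.ef i) (p.vf i.succ) : ℚ))
        = ∏ t ∈ Finset.range p.length, G t := by
      rw [← Fin.prod_univ_eq_prod_range G p.length]
      refine Finset.prod_congr rfl fun i _ => ?_
      rw [hG]
      simp only [Fin.is_lt, dif_pos]
    have hzm : ∏ i : ZMod (m+1),
        (-(γ (ES i) (VS i) : ℚ) / (γ (ES i) (VS (i+1)) : ℚ))
        = ∏ t ∈ Finset.range (m+1), G t := by
      rw [← prod_zmod_eq_prod_range m G]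
      refine Finset.prod_congr rfl fun i _ => ?_
      rw [keyc i]
      have hlt : i.val < p.length := ZMod.val_lt i
      simp only [hG]
      rw [dif_pos hlt]
      rfl
    rw [hfin, show p.length = m + 1 from rfl, ← hzm, hcore]

end MQAux

/-- If `V` is nonempty and `Γ` is connected, has no leaves, and all of its cycles
are balanced (`Γ` is in equilibrium), then `ker γ ≠ {0}`; moreover some element
of `ker γ` is nonzero at every vertex. -/
theorem kerGamma_ne_bot_of_equilibrium {V E : Type*} [Fintype V] [Fintype E]
    [Nonempty V]
    (γ : E → V → ℤ) (hM : CondM γ) (hconn : MQConnected γ)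
    (hnoleaf : ∀ e : E, ¬ ∃! v : V, γ e v ≠ 0)
    (hbal : ∀ c : MQCycle γ, c.Balanced) :
    kerGamma γ ≠ ⊥ ∧ ∃ d ∈ kerGamma γ, ∀ v : V, d v ≠ 0 := by
  classical
  obtain ⟨v0⟩ : Nonempty V := inferInstance
  have hwalk : ∀ v : V, Nonempty (MQAux.MQWalk γ v0 v) :=
    fun v => MQAux.walk_of_reflTransGen (hconn v0 v)
  set d : V → ℚ := fun v => ((hwalk v).some).gain with hd
  have hdpos : ∀ v, 0 < d v := fun v => MQAux.MQWalk.gain_pos hM _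
  have hrel : ∀ (e : E) (v w : V), γ e v ≠ 0 → γ e w ≠ 0 → v ≠ w →
      d w = (-(γ e v : ℚ) / (γ e w : ℚ)) * d v := by
    intro e v w hv hw hvw
    set pc : MQAux.MQWalk γ v0 v0 :=
      (((hwalk v).some.append (.cons e hv hw hvw (.nil w))).append
        ((hwalk w).some.reverse)) with hpc
    have h1 : pc.gain = 1 := MQAux.gain_closed hM hbal pc
    have h2 : pc.gain = d v * ((-(γ e v : ℚ) / (γ e w : ℚ)) * 1) * ((hwalk w).some.reverse.gain) := by
      rw [hpc, MQAux.MQWalk.gain_append, MQAux.MQWalk.gain_append, MQAux.MQWalk.gain_cons,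
        MQAux.MQWalk.gain_nil]
    have h3 : d w * (hwalk w).some.reverse.gain = 1 :=
      MQAux.MQWalk.gain_mul_gain_reverse _
    have hdw : d w ≠ 0 := (hdpos w).ne'
    have hrg : (hwalk w).some.reverse.gain = (d w)⁻¹ := by
      field_simp at h3 ⊢
      linarith [h3]
    rw [hrg] at h2
    rw [h2] at h1
    field_simp at h1
    field_simp
    linarith [h1]
  have hker : ∀ e : E, ∑ v : V, (γ e v : ℚ) * d v = 0 := by
    intro e
    by_cases hz : ∀ v, γ e v = 0
    · simp [hz]
    · push_neg at hz
      obtain ⟨v₁, hv1⟩ := hz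
      have hv2 : ∃ v₂, γ e v₂ ≠ 0 ∧ v₂ ≠ v₁ := by
        by_contra h
        push_neg at h
        exact (hnoleaf e) ⟨v₁, hv1, fun y hy => h y hy⟩
      obtain ⟨v₂, hv2, hne21⟩ := hv2
      have hsub : ∑ v : V, (γ e v : ℚ) * d v = ∑ v ∈ ({v₁, v₂} : Finset V), (γ e v : ℚ) * d v := by
        symm
        apply Finset.sum_subset (Finset.subset_univ _)
        intro x _ hx
        have hx1 : x ≠ v₁ := fun h => hx (by simp [h])
        have hx2 : x ≠ v₂ := fun h => hx (by simp [h])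
        have : γ e x = 0 := by
          by_contra hxx
          rcases MQAux.incident_eq hM hv1 hv2 (Ne.symm hne21) hxx with h | h
          · exact hx1 h
          · exact hx2 h
        simp [this]
      rw [hsub, Finset.sum_pair (Ne.symm hne21)]
      have := hrel e v₁ v₂ hv1 hv2 (Ne.symm hne21)
      rw [this]
      have hb : (γ e v₂ : ℚ) ≠ 0 := by exact_mod_cast hv2
      field_simp
      ring
  have hmem : d ∈ kerGamma γ := hker
  constructor
  · rw [Submodule.ne_bot_iff]
    refine ⟨d, hmem, ?_⟩
    intro h0
    have := congrFun h0 v0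
    exact (hdpos v0).ne' this
  · exact ⟨d, hmem, fun v => (hdpos v).ne'⟩
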